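/- arXiv:2308.06627 — 2 statements merged into one kernel-verified Lean document; each statement's English description precedes it below -/
import Mathlib

section
/- Fix n ≥ 1 and let U ⊂ ℝ^{2n} be the open set of points (λ_1,…,λ_n, w_1,…,w_{n−1}, l) with λ_1,…,λ_n distinct and all nonzero, w_j > 0, Σ_{j=1}^{n−1} w_j < 1, and l > 0. With w_n := 1 − Σ_{j=1}^{n−1} w_j, p(z) := ∏_{j=1}^n (z−λ_j), q(z) := Σ_{j=1}^n w_j ∏_{k≠j}(z−λ_k), define κ_0,…,κ_{n−1} ∈ ℂ by (1+il)p(z) − i l z q(z) = z^n + Σ_{j=0}^{n−1} κ_j z^j. Then the map Φ: U → ℝ^{2n}, Φ = (Re κ_0,…,Re κ_{n−1}, Im κ_0,…,Im κ_{n−1}), is differentiable and |det DΦ| = l^{n−1} · |∏_{j=1}^n λ_j| · ∏_{1≤j<k≤n} |λ_j − λ_k|² at every point of U. -/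
open Polynomial Finset Matrix

section Aux

variable {m : ℕ}

noncomputable def pP (lam : Fin (m+1) → ℝ) : ℝ[X] := ∏ j, (X - C (lam j))
noncomputable def piP (lam : Fin (m+1) → ℝ) (k : Fin (m+1)) : ℝ[X] :=
  ∏ j ∈ Finset.univ.erase k, (X - C (lam j))
noncomputable def wF (w : Fin m → ℝ) : Fin (m+1) → ℝ := Fin.snoc w (1 - ∑ k, w k)
noncomputable def qP (lam : Fin (m+1) → ℝ) (w : Fin m → ℝ) : ℝ[X] :=
  ∑ j, C (wF w j) * piP lam j
noncomputable def rP (lam : Fin (m+1) → ℝ) (w : Fin m → ℝ) : ℝ[X] :=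
  pP lam - X * qP lam w

abbrev EE (m : ℕ) := (Fin (m+1) → ℝ) × (Fin m → ℝ) × ℝ

noncomputable def Phi (m : ℕ) : EE m → EE m := fun y =>
  ((fun j : Fin (m+1) => (pP y.1).coeff (j:ℕ)),
   (fun j : Fin m => y.2.2 * (rP y.1 y.2.1).coeff (j:ℕ)),
   y.2.2 * (rP y.1 y.2.1).coeff m)

/-- standard basis vector -/
def sgl {N : ℕ} (k : Fin N) : Fin N → ℝ := Pi.single k 1

lemma sgl_same {N : ℕ} (k : Fin N) : sgl k k = 1 := by simp [sgl]
lemma sgl_ne {N : ℕ} {j k : Fin N} (h : j ≠ k) : sgl k j = 0 := by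
  simp [sgl, Pi.single_eq_of_ne h]

lemma fderiv_eq_slope {E : Type*} [NormedAddCommGroup E] [NormedSpace ℝ E]
    {g : E → ℝ} {x : E} (v : E) (hg : DifferentiableAt ℝ g x) (a s : ℝ)
    (h : ∀ t : ℝ, g (x + t • v) = a + t * s) : fderiv ℝ g x v = s := by
  have hline : HasDerivAt (fun t : ℝ => x + t • v) v 0 := by
    simpa using ((hasDerivAt_id (0:ℝ)).smul_const v).const_add x
  have h1 : HasDerivAt (fun t : ℝ => g (x + t • v)) (fderiv ℝ g x v) 0 :=
    HasFDerivAt.comp_hasDerivAt 0 (by simpa using hg.hasFDerivAt) hline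
  have h2 : HasDerivAt (fun t : ℝ => a + t * s) s 0 := by
    simpa using ((hasDerivAt_id (0:ℝ)).mul_const s).const_add a
  have h3 : HasDerivAt (fun t : ℝ => g (x + t • v)) s 0 := by
    rw [show (fun t : ℝ => g (x + t • v)) = fun t : ℝ => a + t * s from funext h]
    exact h2
  exact h1.unique h3

lemma pP_slice (lam : Fin (m+1) → ℝ) (k : Fin (m+1)) (t : ℝ) :
    pP (lam + t • sgl k) = (X - C (lam k + t)) * piP lam k := by
  rw [pP, ← Finset.mul_prod_erase Finset.univ _ (Finset.mem_univ k), piP]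
  congr 1
  · congr 1
    simp [sgl_same]
  · refine Finset.prod_congr rfl fun j hj => ?_
    have h : j ≠ k := (Finset.mem_erase.mp hj).1
    simp [sgl_ne h]

lemma wF_slice (w : Fin m → ℝ) (k : Fin m) (t : ℝ) (j : Fin (m+1)) :
    wF (w + t • sgl k) j
      = wF w j + t * (Fin.snoc (sgl k) (-1) : Fin (m+1) → ℝ) j := by
  induction j using Fin.lastCases with
  | last =>
    simp only [wF, Fin.snoc_last]
    have : ∑ i, (w + t • sgl k) i = (∑ i, w i) + t := by
      simp only [Pi.add_apply, Pi.smul_apply, smul_eq_mul, Finset.sum_add_distrib]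
      congr 1
      rw [← Finset.mul_sum]
      simp [sgl, Pi.single_apply, Finset.sum_ite_eq']
    rw [this]
    ring
  | cast i =>
    simp only [wF, Fin.snoc_castSucc]
    simp [sgl, Pi.single_apply]

lemma qP_slice (lam : Fin (m+1) → ℝ) (w : Fin m → ℝ) (k : Fin m) (t : ℝ) :
    qP lam (w + t • sgl k)
      = qP lam w + C t * (piP lam k.castSucc - piP lam (Fin.last m)) := by
  rw [qP, qP]
  have h1 : ∀ j, C (wF (w + t • sgl k) j) * piP lam j
      = C (wF w j) * piP lam j
        + C t * (C ((Fin.snoc (sgl k) (-1) : Fin (m+1) → ℝ) j) * piP lam j) := by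
    intro j
    rw [wF_slice, C_add, C_mul, add_mul]
    ring
  rw [Finset.sum_congr rfl fun j _ => h1 j, Finset.sum_add_distrib, ← Finset.mul_sum]
  congr 1
  rw [Fin.sum_univ_castSucc]
  simp only [Fin.snoc_castSucc, Fin.snoc_last]
  rw [Finset.sum_eq_single k (fun i _ hik => by simp [sgl_ne hik])
    (fun h => absurd (Finset.mem_univ k) h)]
  simp [sgl_same, sub_eq_add_neg]

lemma rP_slice_w (lam : Fin (m+1) → ℝ) (w : Fin m → ℝ) (k : Fin m) (t : ℝ) (i : ℕ) :
    (rP lam (w + t • sgl k)).coeff i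
      = (rP lam w).coeff i
        - t * (X * (piP lam k.castSucc - piP lam (Fin.last m))).coeff i := by
  rw [rP, rP, qP_slice, mul_add, ← sub_sub, Polynomial.coeff_sub]
  congr 1
  rw [show X * (C t * (piP lam k.castSucc - piP lam (Fin.last m)))
      = C t * (X * (piP lam k.castSucc - piP lam (Fin.last m))) by ring,
    Polynomial.coeff_C_mul]

lemma rP_coeff_zero (lam : Fin (m+1) → ℝ) (w : Fin m → ℝ) :
    (rP lam w).coeff 0 = (pP lam).coeff 0 := by
  rw [rP, Polynomial.coeff_sub, Polynomial.mul_coeff_zero]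
  simp

/- ### matrices and determinants -/

noncomputable def Nmat (lam : Fin (m+1) → ℝ) : Matrix (Fin (m+1)) (Fin (m+1)) ℝ :=
  fun i k => (piP lam k).coeff i

noncomputable def Mmat (lam : Fin (m+1) → ℝ) : Matrix (Fin m) (Fin m) ℝ :=
  fun i j => (piP lam j.castSucc - piP lam (Fin.last m)).coeff i

lemma piP_monic (lam : Fin (m+1) → ℝ) (k : Fin (m+1)) : (piP lam k).Monic :=
  monic_prod_of_monic _ _ fun i _ => monic_X_sub_C (lam i)

lemma piP_natDegree (lam : Fin (m+1) → ℝ) (k : Fin (m+1)) : (piP lam k).natDegree = m := by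
  rw [piP, Polynomial.natDegree_prod_of_monic _ _ fun i _ => monic_X_sub_C (lam i)]
  simp [Finset.card_erase_of_mem]

lemma piP_coeff_m (lam : Fin (m+1) → ℝ) (k : Fin (m+1)) : (piP lam k).coeff m = 1 := by
  have h := (piP_monic lam k).coeff_natDegree
  rwa [piP_natDegree] at h

lemma piP_eval (lam : Fin (m+1) → ℝ) (k i : Fin (m+1)) :
    (piP lam k).eval (lam i) = ∏ t ∈ Finset.univ.erase k, (lam i - lam t) := by
  rw [piP, Polynomial.eval_prod]
  exact Finset.prod_congr rfl fun t _ => by simp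

lemma vand_mul_N (lam : Fin (m+1) → ℝ) :
    vandermonde lam * Nmat lam
      = diagonal (fun k => ∏ t ∈ Finset.univ.erase k, (lam k - lam t)) := by
  ext i k
  rw [Matrix.mul_apply]
  have hsum : ∑ j, vandermonde lam i j * Nmat lam j k = (piP lam k).eval (lam i) := by
    rw [Polynomial.eval_eq_sum_range, piP_natDegree]
    rw [← Fin.sum_univ_eq_sum_range (fun j => (piP lam k).coeff j * lam i ^ j) (m+1)]
    exact Finset.sum_congr rfl fun j _ => by rw [Matrix.vandermonde_apply]; unfold Nmat; ring
  rw [hsum, piP_eval]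
  rcases eq_or_ne i k with rfl | hik
  · simp [diagonal]
  · rw [diagonal_apply_ne _ hik]
    exact Finset.prod_eq_zero (Finset.mem_erase.mpr ⟨hik, Finset.mem_univ i⟩) (by ring)

noncomputable def Emat (m : ℕ) : Matrix (Fin (m+1)) (Fin (m+1)) ℝ :=
  fun k j => (if k = j then 1 else 0) + (if k = Fin.last m ∧ j ≠ Fin.last m then -1 else 0)

lemma det_Emat : (Emat m).det = 1 := by
  have htri : (Emat m).BlockTriangular ⇑OrderDual.toDual := by
    intro i j hij
    have hij' : (i : Fin (m+1)) < j := hij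
    have h1 : i ≠ j := ne_of_lt hij'
    have h2 : i ≠ Fin.last m := by
      intro h
      exact absurd (h ▸ hij') (by simp [Fin.lt_iff_val_lt_val]; omega)
    simp [Emat, h1, h2]
  rw [Matrix.det_of_lowerTriangular _ htri]
  refine Finset.prod_eq_one fun i _ => ?_
  simp [Emat]

noncomputable def Ntil (lam : Fin (m+1) → ℝ) : Matrix (Fin (m+1)) (Fin (m+1)) ℝ :=
  fun i j => if j = Fin.last m then (piP lam (Fin.last m)).coeff i
    else (piP lam j - piP lam (Fin.last m)).coeff i

lemma N_mul_E (lam : Fin (m+1) → ℝ) : Nmat lam * Emat m = Ntil lam := by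
  ext i j
  rw [Matrix.mul_apply]
  simp only [Emat, mul_add]
  rw [Finset.sum_add_distrib]
  have h1 : ∑ k, Nmat lam i k * (if k = j then 1 else 0) = Nmat lam i j := by
    rw [Finset.sum_eq_single j (fun k _ hkj => by simp [hkj]) (by simp)]
    simp
  have h2 : ∑ k, Nmat lam i k * (if k = Fin.last m ∧ j ≠ Fin.last m then -1 else 0)
      = if j = Fin.last m then 0 else -Nmat lam i (Fin.last m) := by
    rcases eq_or_ne j (Fin.last m) with rfl | hj
    · simp
    · rw [Finset.sum_eq_single (Fin.last m) (fun k _ hk => by simp [hk]) (by simp)]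
      simp [hj]
  rw [h1, h2, Ntil]
  rcases eq_or_ne j (Fin.last m) with rfl | hj
  · simp [Nmat]
  · simp only [if_neg hj, Nmat, Polynomial.coeff_sub]
    ring

lemma det_Ntil_eq_M (lam : Fin (m+1) → ℝ) : (Ntil lam).det = (Mmat lam).det := by
  rw [Matrix.det_succ_row (Ntil lam) (Fin.last m)]
  rw [Finset.sum_eq_single (Fin.last m) ?side ?notmem]
  case side =>
    intro j _ hj
    have : Ntil lam (Fin.last m) j = 0 := by
      rw [Ntil, if_neg hj]
      rw [Polynomial.coeff_sub]
      rw [show ((Fin.last m : Fin (m+1)) : ℕ) = m from rfl, piP_coeff_m, piP_coeff_m]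
      ring
    rw [this]; ring
  case notmem => intro h; exact absurd (Finset.mem_univ _) h
  have hNll : Ntil lam (Fin.last m) (Fin.last m) = 1 := by
    rw [Ntil, if_pos rfl]
    exact piP_coeff_m lam _
  rw [hNll, Fin.succAbove_last]
  have hsub : (Ntil lam).submatrix Fin.castSucc Fin.castSucc = Mmat lam := by
    ext i j
    rw [Matrix.submatrix_apply, Ntil, if_neg (Fin.castSucc_lt_last j).ne, Mmat]
    rfl
  rw [hsub]
  rw [show ((Fin.last m : Fin (m+1)) : ℕ) = m from rfl, ← two_mul, pow_mul]
  norm_num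

/-- the square B-matrix on `Fin (m+1)` : columns `castSucc k` are the w-derivatives,
column `last` is the l-derivative. -/
noncomputable def Bsq (lam : Fin (m+1) → ℝ) (r : ℝ[X]) (l : ℝ) :
    Matrix (Fin (m+1)) (Fin (m+1)) ℝ :=
  fun i => Fin.snoc
    (fun k : Fin m => -l * (X * (piP lam k.castSucc - piP lam (Fin.last m))).coeff (i : ℕ))
    (r.coeff (i : ℕ))

lemma det_Bsq (lam : Fin (m+1) → ℝ) (r : ℝ[X]) (l : ℝ) :
    (Bsq lam r l).det = l ^ m * r.coeff 0 * (Mmat lam).det := by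
  rw [Matrix.det_succ_row_zero]
  rw [Finset.sum_eq_single (Fin.last m) ?side ?notmem]
  case side =>
    intro j _ hj
    have hz : Bsq lam r l 0 j = 0 := by
      induction j using Fin.lastCases with
      | last => exact absurd rfl hj
      | cast j' =>
        rw [Bsq]
        simp only [Fin.snoc_castSucc]
        rw [show ((0 : Fin (m+1)) : ℕ) = 0 from rfl, Polynomial.mul_coeff_zero]
        simp
    rw [hz]; ring
  case notmem => intro h; exact absurd (Finset.mem_univ _) h
  have h00 : Bsq lam r l 0 (Fin.last m) = r.coeff 0 := by
    rw [Bsq]; simp only [Fin.snoc_last]; rfl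
  rw [h00, Fin.succAbove_last]
  have hsub : (Bsq lam r l).submatrix Fin.succ Fin.castSucc = (-l) • Mmat lam := by
    ext i j
    rw [Matrix.submatrix_apply, Bsq]
    simp only [Fin.snoc_castSucc]
    rw [show ((Fin.succ i : Fin (m+1)) : ℕ) = (i : ℕ) + 1 from rfl, Polynomial.coeff_X_mul]
    simp [Mmat, Matrix.smul_apply]
  rw [hsub, Matrix.det_smul, Fintype.card_fin]
  rw [show ((Fin.last m : Fin (m+1)) : ℕ) = m from rfl]
  rw [neg_pow l m]
  ring_nf
  rw [show m*2 = 2*m by ring, pow_mul]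
  norm_num

/-- equivalence used to pass between `Fin m ⊕ Unit` and `Fin (m+1)`. -/
def sigEq (m : ℕ) : Fin m ⊕ Unit ≃ Fin (m+1) where
  toFun := Sum.elim Fin.castSucc (fun _ => Fin.last m)
  invFun := Fin.lastCases (Sum.inr ()) (fun i => Sum.inl i)
  left_inv := by
    rintro (i | ⟨⟩)
    · simp
    · simp
  right_inv := by
    intro j
    induction j using Fin.lastCases with
    | last => simp
    | cast i => simp

/-- pair product combinatorics -/
lemma prod_erase_pairs (f : Fin (m+1) → Fin (m+1) → ℝ) (hsymm : ∀ i j, f i j = f j i) :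
    ∏ k, ∏ t ∈ Finset.univ.erase k, f k t
      = (∏ p ∈ Finset.univ.filter (fun p : Fin (m+1) × Fin (m+1) => p.1 < p.2), f p.1 p.2)^2 := by
  classical
  have h1 : ∏ k, ∏ t ∈ Finset.univ.erase k, f k t
      = ∏ p ∈ (Finset.univ ×ˢ Finset.univ).filter
          (fun p : Fin (m+1) × Fin (m+1) => p.2 ≠ p.1), f p.1 p.2 := by
    rw [Finset.prod_filter, Finset.prod_product]
    refine Finset.prod_congr rfl fun k _ => ?_
    dsimp only
    rw [← Finset.prod_filter]
    congr 1
    ext t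
    simp [Finset.mem_erase, and_comm]
  rw [h1, Finset.univ_product_univ]
  have h2 : (Finset.univ.filter (fun p : Fin (m+1) × Fin (m+1) => p.2 ≠ p.1))
      = (Finset.univ.filter (fun p : Fin (m+1) × Fin (m+1) => p.1 < p.2))
        ∪ (Finset.univ.filter (fun p : Fin (m+1) × Fin (m+1) => p.2 < p.1)) := by
    rw [← Finset.filter_or]
    refine Finset.filter_congr fun p _ => ?_
    constructor
    · intro h; exact lt_or_gt_of_ne (Ne.symm h)
    · rintro (h | h)
      · exact (ne_of_lt h).symm
      · exact (ne_of_lt h)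
  rw [h2, Finset.prod_union]
  · have h3 : ∏ p ∈ Finset.univ.filter (fun p : Fin (m+1) × Fin (m+1) => p.2 < p.1), f p.1 p.2
        = ∏ p ∈ Finset.univ.filter (fun p : Fin (m+1) × Fin (m+1) => p.1 < p.2), f p.1 p.2 := by
      refine Finset.prod_bij (fun p _ => Prod.swap p) ?_ ?_ ?_ ?_
      · intro p hp; simp at hp ⊢; exact hp
      · intro p1 h1 p2 h2 h; exact Prod.swap_injective h
      · intro p hp; exact ⟨Prod.swap p, by simpa using (Finset.mem_filter.mp hp).2, by simp⟩
      · intro p _; exact hsymm p.1 p.2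
    rw [h3, sq]
  · rw [Finset.disjoint_filter]
    intro p _ h1 h2
    exact absurd h1 (asymm h2)

lemma Ioi_pairs (f : Fin (m+1) → Fin (m+1) → ℝ) (hsymm : ∀ i j, f i j = f j i) :
    ∏ i, ∏ j ∈ Finset.Ioi i, f j i
      = ∏ p ∈ Finset.univ.filter (fun p : Fin (m+1) × Fin (m+1) => p.1 < p.2), f p.1 p.2 := by
  classical
  rw [Finset.prod_filter, ← Finset.univ_product_univ, Finset.prod_product]
  refine Finset.prod_congr rfl fun i _ => ?_
  dsimp only
  rw [← Finset.prod_filter]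
  rw [show Finset.univ.filter (fun j => i < j) = Finset.Ioi i from by ext j; simp]
  exact Finset.prod_congr rfl fun j _ => hsymm j i

/- ### differentiability -/

lemma diffApply {ι : Type*} [Fintype ι] (a : ι) :
    Differentiable ℝ (fun f : ι → ℝ => f a) :=
  (ContinuousLinearMap.proj a : (ι → ℝ) →L[ℝ] ℝ).differentiable

lemma diffProdCoeff (s : Finset (Fin (m+1))) (j : ℕ) :
    Differentiable ℝ (fun lam : Fin (m+1) → ℝ => (∏ k ∈ s, (X - C (lam k))).coeff j) := by
  induction s using Finset.induction_on generalizing j with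
  | empty =>
    simp only [Finset.prod_empty, Polynomial.coeff_one]
    exact differentiable_const _
  | insert a s ha ih =>
    simp only [Finset.prod_insert ha, sub_mul, Polynomial.coeff_sub, Polynomial.coeff_C_mul]
    cases j with
    | zero =>
      simp only [Polynomial.mul_coeff_zero, Polynomial.coeff_X_zero, zero_mul]
      exact (differentiable_const 0).sub ((diffApply a).mul (ih 0))
    | succ j =>
      simp only [Polynomial.coeff_X_mul]
      exact (ih j).sub ((diffApply a).mul (ih (j+1)))

lemma diffWF (j : Fin (m+1)) :
    Differentiable ℝ (fun w : Fin m → ℝ => wF w j) := by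
  induction j using Fin.lastCases with
  | last =>
    simp only [wF, Fin.snoc_last]
    exact (differentiable_const 1).sub (Differentiable.fun_sum fun i _ => diffApply i)
  | cast i =>
    simp only [wF, Fin.snoc_castSucc]
    exact diffApply i

lemma diff_pP_coeff (c : ℕ) : Differentiable ℝ (fun y : EE m => (pP y.1).coeff c) := by
  have := (diffProdCoeff (m := m) Finset.univ c).comp (differentiable_fst (𝕜 := ℝ)
    (E := Fin (m+1) → ℝ) (F := (Fin m → ℝ) × ℝ))
  exact this

lemma diff_qP_coeff (c : ℕ) : Differentiable ℝ (fun y : EE m => (qP y.1 y.2.1).coeff c) := by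
  have heq : (fun y : EE m => (qP y.1 y.2.1).coeff c)
      = fun y : EE m => ∑ j, wF y.2.1 j * (piP y.1 j).coeff c := by
    funext y
    rw [qP, Polynomial.finset_sum_coeff]
    exact Finset.sum_congr rfl fun j _ => Polynomial.coeff_C_mul _
  rw [heq]
  refine Differentiable.fun_sum fun j _ => Differentiable.mul ?_ ?_
  · exact (diffWF j).comp (differentiable_fst.comp differentiable_snd)
  · exact (diffProdCoeff (Finset.univ.erase j) c).comp differentiable_fst

lemma diff_rP_coeff (c : ℕ) : Differentiable ℝ (fun y : EE m => (rP y.1 y.2.1).coeff c) := by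
  have heq : (fun y : EE m => (rP y.1 y.2.1).coeff c)
      = fun y : EE m => (pP y.1).coeff c
          - (if h : c = 0 then 0 else (qP y.1 y.2.1).coeff (c - 1)) := by
    funext y
    cases c with
    | zero => simp [rP, Polynomial.mul_coeff_zero]
    | succ c' => simp [rP, Polynomial.coeff_sub, Polynomial.coeff_X_mul]
  rw [heq]
  refine (diff_pP_coeff c).sub ?_
  by_cases h : c = 0
  · simp only [h]
    simpa using differentiable_const (0:ℝ)
  · simp only [dif_neg h]
    exact diff_qP_coeff (c-1)

lemma diff_Phi : Differentiable ℝ (Phi m) := by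
  refine Differentiable.prodMk ?_ (Differentiable.prodMk ?_ ?_)
  · rw [differentiable_pi]
    intro i
    exact diff_pP_coeff (i : ℕ)
  · rw [differentiable_pi]
    intro i
    exact (differentiable_snd.comp differentiable_snd).mul (diff_rP_coeff (i:ℕ))
  · exact (differentiable_snd.comp differentiable_snd).mul (diff_rP_coeff m)

end Aux

noncomputable def specToCoeffs (m : ℕ) :
    ((Fin (m + 1) → ℝ) × (Fin m → ℝ) × ℝ) → ((Fin (m + 1) → ℝ) × (Fin m → ℝ) × ℝ) :=
  fun x =>
    let lam := x.1
    let w := x.2.1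
    let l := x.2.2
    let wf : Fin (m + 1) → ℝ := Fin.snoc w (1 - ∑ k, w k)
    let P : Polynomial ℂ :=
      C (1 + Complex.I * l) * ∏ j, (X - C (lam j : ℂ)) -
        C (Complex.I * l) *
          (X * ∑ j, C (wf j : ℂ) * ∏ k ∈ Finset.univ.erase j, (X - C (lam k : ℂ)))
    (fun j : Fin (m + 1) => (P.coeff (j : ℕ)).re,
     fun j : Fin m => (P.coeff (j : ℕ)).im,
     (P.coeff m).im)

theorem specToCoeffs_eq (m : ℕ) : specToCoeffs m = Phi m := by
  funext y
  obtain ⟨lam, w, l⟩ := y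
  simp only [specToCoeffs, Phi]
  have hmap : ∀ (s : Finset (Fin (m+1))),
      (∏ j ∈ s, (X - C ((lam j : ℝ) : ℂ))) = (∏ j ∈ s, (X - C (lam j))).map (algebraMap ℝ ℂ) := by
    intro s
    rw [Polynomial.map_prod]
    refine Finset.prod_congr rfl fun j _ => ?_
    simp [Polynomial.map_sub]
  have hq : (∑ j, C (((Fin.snoc w (1 - ∑ k, w k) : Fin (m+1) → ℝ) j : ℝ) : ℂ) *
        ∏ k ∈ Finset.univ.erase j, (X - C ((lam k : ℝ):ℂ)))
      = (qP lam w).map (algebraMap ℝ ℂ) := by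
    rw [qP, Polynomial.map_sum]
    refine Finset.sum_congr rfl fun j _ => ?_
    rw [Polynomial.map_mul, hmap, piP, wF]
    simp
  have key : ∀ i : ℕ,
      (C (1 + Complex.I * l) * ∏ j, (X - C ((lam j : ℝ) : ℂ)) -
        C (Complex.I * l) *
          (X * ∑ j, C (((Fin.snoc w (1 - ∑ k, w k) : Fin (m+1) → ℝ) j : ℝ) : ℂ) *
            ∏ k ∈ Finset.univ.erase j, (X - C ((lam k:ℝ) : ℂ)))).coeff i
      = ((pP lam).coeff i : ℂ) + Complex.I * l * ((rP lam w).coeff i : ℂ) := by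
    intro i
    rw [hmap Finset.univ, hq]
    have : (C (1 + Complex.I * l) * (pP lam).map (algebraMap ℝ ℂ) -
        C (Complex.I * l) * (X * (qP lam w).map (algebraMap ℝ ℂ)))
        = (pP lam).map (algebraMap ℝ ℂ)
          + C (Complex.I * l) * ((rP lam w).map (algebraMap ℝ ℂ)) := by
      rw [rP, Polynomial.map_sub, Polynomial.map_mul, Polynomial.map_X, C_add, C_1]
      ring
    rw [show (∏ j, (X - C (lam j)) : ℝ[X]) = pP lam from rfl, this]
    simp [Polynomial.coeff_map, Complex.coe_algebraMap, mul_assoc]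
  refine Prod.ext ?_ (Prod.ext ?_ ?_) <;> dsimp only
  · funext j
    rw [key]
    simp
  · funext j
    rw [key]
    simp
  · rw [key]
    simp

/-- on the open set of (λ, w, l) with λ_j distinct and nonzero, w_j > 0,
Σ w_j < 1 and l > 0, the map Φ = (Re κ, Im κ) is differentiable with
|det DΦ| = l^{n−1} · |∏ λ_j| · ∏_{j<k} |λ_j − λ_k|². -/
theorem stmt9 (m : ℕ) (x : (Fin (m + 1) → ℝ) × (Fin m → ℝ) × ℝ)
    (hlam : Function.Injective x.1) (hlam0 : ∀ j, x.1 j ≠ 0)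
    (hw : ∀ j, 0 < x.2.1 j) (hw1 : ∑ j, x.2.1 j < 1) (hl : 0 < x.2.2) :
    DifferentiableAt ℝ (specToCoeffs m) x ∧
    |LinearMap.det ((fderiv ℝ (specToCoeffs m) x).toLinearMap)| =
      x.2.2 ^ m * |∏ j, x.1 j| *
        ∏ p ∈ Finset.univ.filter (fun p : Fin (m + 1) × Fin (m + 1) => p.1 < p.2),
          |x.1 p.1 - x.1 p.2| ^ 2 := by
  obtain ⟨lam, w, l⟩ := x
  dsimp only at hlam hlam0 hw hw1 hl ⊢
  rw [specToCoeffs_eq]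
  refine ⟨diff_Phi.differentiableAt, ?_⟩
  have hdiffAt : DifferentiableAt ℝ (Phi m) (lam, w, l) := diff_Phi.differentiableAt
  set bE : Module.Basis (Fin (m+1) ⊕ (Fin m ⊕ Unit)) ℝ (EE m) :=
    (Pi.basisFun ℝ (Fin (m+1))).prod ((Pi.basisFun ℝ (Fin m)).prod (Module.Basis.singleton Unit ℝ))
    with hbE
  rw [← LinearMap.det_toMatrix bE]
  set D := fderiv ℝ (Phi m) (lam, w, l) with hD
  set J := LinearMap.toMatrix bE bE (D : EE m →ₗ[ℝ] EE m) with hJdef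
  -- basis vectors
  have hb1 : ∀ k : Fin (m+1), bE (Sum.inl k) = ((sgl k, 0, 0) : EE m) := by
    intro k
    rw [hbE]
    refine Prod.ext ?_ (Prod.ext ?_ ?_) <;>
      simp [Module.Basis.prod_apply, Pi.basisFun_apply, sgl]
  have hb2 : ∀ k : Fin m, bE (Sum.inr (Sum.inl k)) = ((0, sgl k, 0) : EE m) := by
    intro k
    rw [hbE]
    refine Prod.ext ?_ (Prod.ext ?_ ?_) <;>
      simp [Module.Basis.prod_apply, Pi.basisFun_apply, sgl]
  have hb3 : bE (Sum.inr (Sum.inr ())) = ((0, 0, 1) : EE m) := by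
    rw [hbE]
    refine Prod.ext ?_ (Prod.ext ?_ ?_) <;>
      simp [Module.Basis.prod_apply, Module.Basis.singleton_apply]
  -- coordinates of repr
  have hrepr1 : ∀ (u : EE m) (i : Fin (m+1)), bE.repr u (Sum.inl i) = u.1 i := by
    intro u i; rw [hbE]; simp [Module.Basis.prod_repr_inl, Pi.basisFun_repr]
  have hrepr2 : ∀ (u : EE m) (i : Fin m), bE.repr u (Sum.inr (Sum.inl i)) = u.2.1 i := by
    intro u i; rw [hbE]; simp [Module.Basis.prod_repr_inr, Module.Basis.prod_repr_inl, Pi.basisFun_repr]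
  have hrepr3 : ∀ (u : EE m), bE.repr u (Sum.inr (Sum.inr ())) = u.2.2 := by
    intro u; rw [hbE]; simp [Module.Basis.prod_repr_inr, Module.Basis.singleton_repr]
  -- fderiv coordinates
  have hc1 : ∀ (i : Fin (m+1)) (v : EE m), (D v).1 i
      = fderiv ℝ (fun y : EE m => (pP y.1).coeff (i:ℕ)) (lam, w, l) v := by
    intro i v
    have hcomp : (fun y : EE m => (pP y.1).coeff (i:ℕ))
        = (⇑((ContinuousLinearMap.proj i).comp
            (ContinuousLinearMap.fst ℝ (Fin (m+1) → ℝ) ((Fin m → ℝ) × ℝ))) ∘ (Phi m)) := rfl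
    rw [hcomp, fderiv_comp _ (ContinuousLinearMap.differentiableAt _) hdiffAt,
      ContinuousLinearMap.fderiv]
    rfl
  have hc2 : ∀ (i : Fin m) (v : EE m), (D v).2.1 i
      = fderiv ℝ (fun y : EE m => y.2.2 * (rP y.1 y.2.1).coeff (i:ℕ)) (lam, w, l) v := by
    intro i v
    have hcomp : (fun y : EE m => y.2.2 * (rP y.1 y.2.1).coeff (i:ℕ))
        = (⇑((ContinuousLinearMap.proj i).comp
            ((ContinuousLinearMap.fst ℝ (Fin m → ℝ) ℝ).comp
              (ContinuousLinearMap.snd ℝ (Fin (m+1) → ℝ) ((Fin m → ℝ) × ℝ)))) ∘ (Phi m)) := rfl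
    rw [hcomp, fderiv_comp _ (ContinuousLinearMap.differentiableAt _) hdiffAt,
      ContinuousLinearMap.fderiv]
    rfl
  have hc3 : ∀ (v : EE m), (D v).2.2
      = fderiv ℝ (fun y : EE m => y.2.2 * (rP y.1 y.2.1).coeff m) (lam, w, l) v := by
    intro v
    have hcomp : (fun y : EE m => y.2.2 * (rP y.1 y.2.1).coeff m)
        = (⇑((ContinuousLinearMap.snd ℝ (Fin m → ℝ) ℝ).comp
              (ContinuousLinearMap.snd ℝ (Fin (m+1) → ℝ) ((Fin m → ℝ) × ℝ))) ∘ (Phi m)) := rfl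
    rw [hcomp, fderiv_comp _ (ContinuousLinearMap.differentiableAt _) hdiffAt,
      ContinuousLinearMap.fderiv]
    rfl
  -- slopes
  have hA : ∀ (c : ℕ) (k : Fin (m+1)),
      fderiv ℝ (fun y : EE m => (pP y.1).coeff c) (lam, w, l) ((sgl k, 0, 0) : EE m)
        = -((piP lam k).coeff c) := by
    intro c k
    refine fderiv_eq_slope _ ((diff_pP_coeff c).differentiableAt)
      ((X * piP lam k).coeff c - lam k * (piP lam k).coeff c) (-((piP lam k).coeff c)) ?_
    intro t
    have h1 : ((lam, w, l) + t • ((sgl k, 0, 0) : EE m)) = (lam + t • sgl k, w, l) := by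
      refine Prod.ext ?_ (Prod.ext ?_ ?_) <;> simp
    rw [h1]
    show (pP (lam + t • sgl k)).coeff c = _
    rw [pP_slice, sub_mul, Polynomial.coeff_sub, Polynomial.coeff_C_mul]
    ring
  have hZ : ∀ (c : ℕ) (v2 : (Fin m → ℝ) × ℝ),
      fderiv ℝ (fun y : EE m => (pP y.1).coeff c) (lam, w, l) ((0, v2) : EE m) = 0 := by
    intro c v2
    refine fderiv_eq_slope _ ((diff_pP_coeff c).differentiableAt) ((pP lam).coeff c) 0 ?_
    intro t
    have h1 : ((lam, w, l) + t • ((0, v2) : EE m)) = (lam, (w, l) + t • v2) := by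
      refine Prod.ext ?_ ?_ <;> simp
    rw [h1]
    show (pP lam).coeff c = _
    ring
  have hBw : ∀ (c : ℕ) (k : Fin m),
      fderiv ℝ (fun y : EE m => y.2.2 * (rP y.1 y.2.1).coeff c) (lam, w, l)
          ((0, sgl k, 0) : EE m)
        = -l * (X * (piP lam k.castSucc - piP lam (Fin.last m))).coeff c := by
    intro c k
    refine fderiv_eq_slope _
      (((differentiable_snd.comp differentiable_snd).mul (diff_rP_coeff c)).differentiableAt)
      (l * (rP lam w).coeff c)
      (-l * (X * (piP lam k.castSucc - piP lam (Fin.last m))).coeff c) ?_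
    intro t
    have h1 : ((lam, w, l) + t • ((0, sgl k, 0) : EE m)) = (lam, w + t • sgl k, l) := by
      refine Prod.ext ?_ (Prod.ext ?_ ?_) <;> simp
    rw [h1]
    show l * (rP lam (w + t • sgl k)).coeff c = _
    rw [rP_slice_w]
    ring
  have hBl : ∀ (c : ℕ),
      fderiv ℝ (fun y : EE m => y.2.2 * (rP y.1 y.2.1).coeff c) (lam, w, l)
          ((0, 0, 1) : EE m)
        = (rP lam w).coeff c := by
    intro c
    refine fderiv_eq_slope _
      (((differentiable_snd.comp differentiable_snd).mul (diff_rP_coeff c)).differentiableAt)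
      (l * (rP lam w).coeff c) ((rP lam w).coeff c) ?_
    intro t
    have h1 : ((lam, w, l) + t • ((0, 0, 1) : EE m)) = (lam, w, l + t) := by
      refine Prod.ext ?_ (Prod.ext ?_ ?_) <;> simp
    rw [h1]
    show (l + t) * (rP lam w).coeff c = _
    ring
  -- entry access
  have hJap : ∀ i j, J i j = bE.repr (D (bE j)) i := by
    intro i j
    rw [hJdef, LinearMap.toMatrix_apply]
    rfl
  -- block structure
  have hfrom : J = Matrix.fromBlocks (-(Nmat lam)) 0
      (Matrix.of fun i k => J (Sum.inr i) (Sum.inl k))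
      ((Bsq lam (rP lam w) l).submatrix (sigEq m) (sigEq m)) := by
    ext i j
    cases i with
    | inl i' =>
      cases j with
      | inl k =>
        rw [hJap, hb1, hrepr1, hc1, hA]
        simp [Nmat]
      | inr j'' =>
        have hz : J (Sum.inl i') (Sum.inr j'') = 0 := by
          cases j'' with
          | inl k => rw [hJap, hb2, hrepr1, hc1]; exact hZ _ _
          | inr u => cases u; rw [hJap, hb3, hrepr1, hc1]; exact hZ _ _
        rw [hz]
        simp
    | inr i'' =>
      cases j with
      | inl k => simp [Matrix.fromBlocks]
      | inr j'' =>
        cases i'' with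
        | inl i' =>
          cases j'' with
          | inl k =>
            rw [hJap, hb2, hrepr2, hc2, hBw]
            simp [Bsq, sigEq, Fin.snoc_castSucc]
          | inr u =>
            cases u
            rw [hJap, hb3, hrepr2, hc2, hBl]
            simp [Bsq, sigEq, Fin.snoc_last]
        | inr u =>
          cases u
          cases j'' with
          | inl k =>
            rw [hJap, hb2, hrepr3, hc3, hBw]
            simp [Bsq, sigEq, Fin.snoc_castSucc]
          | inr u2 =>
            cases u2
            rw [hJap, hb3, hrepr3, hc3, hBl]
            simp [Bsq, sigEq, Fin.snoc_last]
  rw [hfrom, Matrix.det_fromBlocks_zero₁₂, Matrix.det_submatrix_equiv_self, det_Bsq]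
  have hMN : (Mmat lam).det = (Nmat lam).det := by
    rw [← det_Ntil_eq_M, ← N_mul_E, Matrix.det_mul, det_Emat, mul_one]
  rw [hMN, Matrix.det_neg, Fintype.card_fin]
  -- now pure computation of the absolute value
  set Pi2 := ∏ p ∈ Finset.univ.filter (fun p : Fin (m+1) × Fin (m+1) => p.1 < p.2),
    |lam p.1 - lam p.2| with hPi2
  have hPi2pos : 0 < Pi2 := by
    rw [hPi2]
    refine Finset.prod_pos fun p hp => abs_pos.mpr (sub_ne_zero.mpr ?_)
    intro hh
    exact absurd (hlam hh) (ne_of_lt (Finset.mem_filter.mp hp).2)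
  have hdetV : |(vandermonde lam).det| = Pi2 := by
    rw [Matrix.det_vandermonde, Finset.abs_prod,
      Finset.prod_congr rfl (fun i _ => Finset.abs_prod _ _), hPi2]
    exact Ioi_pairs (fun a b => |lam a - lam b|) (fun a b => abs_sub_comm _ _)
  have hdetN : |(Nmat lam).det| = Pi2 := by
    have h1 : (vandermonde lam).det * (Nmat lam).det
        = ∏ k, ∏ t ∈ Finset.univ.erase k, (lam k - lam t) := by
      rw [← Matrix.det_mul, vand_mul_N lam, Matrix.det_diagonal]
    have h2 : |(vandermonde lam).det| * |(Nmat lam).det| = Pi2 * Pi2 := by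
      rw [← abs_mul, h1, Finset.abs_prod,
        Finset.prod_congr rfl (fun k _ => Finset.abs_prod _ _), hPi2,
        prod_erase_pairs (fun a b => |lam a - lam b|) (fun a b => abs_sub_comm _ _), sq]
    rw [hdetV] at h2
    exact mul_left_cancel₀ (ne_of_gt hPi2pos) h2
  have hr0abs : |(rP lam w).coeff 0| = |∏ j, lam j| := by
    rw [rP_coeff_zero, pP, Polynomial.coeff_zero_eq_eval_zero, Polynomial.eval_prod]
    rw [show ∏ j, ((X : ℝ[X]) - C (lam j)).eval 0 = ∏ j, -(lam j) from
      Finset.prod_congr rfl fun j _ => by simp]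
    rw [Finset.abs_prod, Finset.prod_congr rfl (fun j _ => abs_neg (lam j)), ← Finset.abs_prod]
  have key : |(-1:ℝ) ^ (m+1) * (Nmat lam).det * (l ^ m * (rP lam w).coeff 0 * (Nmat lam).det)|
      = l ^ m * |∏ j, lam j| * Pi2 ^ 2 := by
    rw [abs_mul, abs_mul, abs_mul, abs_mul, hdetN, hr0abs, abs_pow, abs_pow, abs_neg, abs_one,
      one_pow, one_mul, abs_of_pos hl]
    ring
  rw [key, hPi2, ← Finset.prod_pow]
end

section
/- Fix distinct nonzero reals λ_1,…,λ_m. On the open simplex U = {(w_1,…,w_m) ∈ ℝ^m : w_j > 0, Σ_{j=1}^m w_j < 1}, set w_0 := 1 − Σ_{j=1}^m w_j and let q(z) = Σ_{j=0}^m q_j z^j (with q_m = 1) be defined by q(z) := w_0 ∏_{j=1}^m (z−λ_j) + Σ_{j=1}^m w_j z ∏_{k≠j} (z−λ_k). Then the map (w_1,…,w_m) ↦ (q_0,…,q_{m−1}) is differentiable on U and the absolute value of the determinant of its Jacobian matrix equals ∏_{j=1}^m |λ_j| · ∏_{1≤j<k≤m} |λ_j − λ_k| at every point of U. -/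
open Polynomial

/-- The map from the weights (w₁,…,w_m) on the open simplex to the lower coefficients
(q₀,…,q_{m−1}) of q(z) = w₀∏_j(z−λ_j) + Σ_j w_j z ∏_{k≠j}(z−λ_k), with
w₀ := 1 − Σ_j w_j. -/
noncomputable def weightsToCoeffs0 {m : ℕ} (lam : Fin m → ℝ) (v : Fin m → ℝ)
    (i : Fin m) : ℝ :=
  (C (1 - ∑ k, v k) * ∏ j, (X - C (lam j)) +
      ∑ j, C (v j) * (X * ∏ k ∈ Finset.univ.erase j, (X - C (lam k)))).coeff (i : ℕ)

open Finset

lemma prod_pairs {m : ℕ} {M : Type*} [CommMonoid M] (s : Fin m → Finset (Fin m))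
    (g : Fin m → Fin m → M) :
    ∏ p ∈ Finset.univ.filter (fun p : Fin m × Fin m => p.2 ∈ s p.1), g p.1 p.2
      = ∏ i, ∏ j ∈ s i, g i j := by
  rw [Finset.prod_sigma']
  exact Finset.prod_nbij' (fun p => ⟨p.1, p.2⟩) (fun x => (x.1, x.2))
    (by simp +contextual [Finset.mem_filter]) (by simp) (by simp) (by simp) (by simp)

lemma vand_mul {m : ℕ} (lam : Fin m → ℝ) (hlam : Function.Injective lam) :
    Matrix.vandermonde lam *
      Matrix.of (fun i j : Fin m =>
        (∏ k ∈ Finset.univ.erase j, (X - C (lam k)) : ℝ[X]).coeff i) =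
    Matrix.diagonal (fun j => ∏ k ∈ Finset.univ.erase j, (lam j - lam k)) := by
  ext l j
  have hm : 0 < m := l.pos
  set Pj : ℝ[X] := ∏ k ∈ Finset.univ.erase j, (X - C (lam k)) with hPj
  have hdeg : Pj.natDegree < m := by
    rw [hPj, Polynomial.natDegree_prod_of_monic _ _ (fun k _ => monic_X_sub_C _)]
    simp [Polynomial.natDegree_X_sub_C, Finset.card_erase_of_mem]
    omega
  have heval : Pj.eval (lam l) = ∑ i : Fin m, Pj.coeff i * lam l ^ (i : ℕ) := by
    rw [Polynomial.eval_eq_sum_range' hdeg, ← Fin.sum_univ_eq_sum_range (fun i => Pj.coeff i * lam l ^ i)]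
  have hev : Pj.eval (lam l) = ∏ k ∈ Finset.univ.erase j, (lam l - lam k) := by
    simp [hPj, Polynomial.eval_prod]
  rw [Matrix.mul_apply]
  simp only [Matrix.vandermonde, Matrix.of_apply]
  have : ∑ i : Fin m, lam l ^ (i : ℕ) * Pj.coeff i = Pj.eval (lam l) := by
    rw [heval]; exact Finset.sum_congr rfl fun i _ => mul_comm _ _
  rw [this]
  by_cases h : l = j
  · subst h
    rw [hev, Matrix.diagonal_apply_eq]
  · rw [Matrix.diagonal_apply_ne _ h, hev]
    exact Finset.prod_eq_zero (Finset.mem_erase.2 ⟨h, Finset.mem_univ l⟩) (sub_self _)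

lemma detA_abs {m : ℕ} (lam : Fin m → ℝ) (hlam : Function.Injective lam) :
    |(Matrix.of (fun i j : Fin m =>
        (∏ k ∈ Finset.univ.erase j, (X - C (lam k)) : ℝ[X]).coeff i)).det| =
    ∏ p ∈ Finset.univ.filter (fun p : Fin m × Fin m => p.1 < p.2), |lam p.1 - lam p.2| := by
  set A := Matrix.of (fun i j : Fin m =>
        (∏ k ∈ Finset.univ.erase j, (X - C (lam k)) : ℝ[X]).coeff i) with hA
  set T1 := Finset.univ.filter (fun p : Fin m × Fin m => p.1 < p.2) with hT1
  set T2 := Finset.univ.filter (fun p : Fin m × Fin m => p.2 < p.1) with hT2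
  set g : Fin m × Fin m → ℝ := fun p => |lam p.1 - lam p.2| with hg
  have h := congrArg Matrix.det (vand_mul lam hlam)
  rw [Matrix.det_mul, Matrix.det_diagonal] at h
  have habs := congrArg abs h
  rw [abs_mul, Finset.abs_prod] at habs
  -- |det V| = ∏_{T1} g
  have hV : |(Matrix.vandermonde lam).det| = ∏ p ∈ T1, g p := by
    rw [Matrix.det_vandermonde, Finset.abs_prod]
    have : ∀ i : Fin m, |∏ j ∈ Finset.Ioi i, (lam j - lam i)|
        = ∏ j ∈ Finset.Ioi i, |lam i - lam j| := by
      intro i; rw [Finset.abs_prod]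
      exact Finset.prod_congr rfl fun j _ => abs_sub_comm _ _
    rw [Finset.prod_congr rfl fun i _ => this i, ← prod_pairs Finset.Ioi (fun i j => |lam i - lam j|)]
    apply Finset.prod_congr _ (fun p _ => rfl)
    apply Finset.filter_congr
    intro p _
    simp [Finset.mem_Ioi]
  -- ∏ |d j| = ∏_{T1} g * ∏_{T1} g
  have hd : (∏ j, |∏ k ∈ Finset.univ.erase j, (lam j - lam k)|)
      = (∏ p ∈ T1, g p) * ∏ p ∈ T1, g p := by
    have h1 : (∏ j, |∏ k ∈ Finset.univ.erase j, (lam j - lam k)|)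
        = ∏ j, ∏ k ∈ Finset.univ.erase j, |lam j - lam k| :=
      Finset.prod_congr rfl fun j _ => Finset.abs_prod _ _
    rw [h1, ← prod_pairs (fun j => Finset.univ.erase j) (fun j k => |lam j - lam k|)]
    have hsplit : Finset.univ.filter
        (fun p : Fin m × Fin m => p.2 ∈ Finset.univ.erase p.1) = T1 ∪ T2 := by
      ext p
      simp only [hT1, hT2, Finset.mem_union, Finset.mem_filter, Finset.mem_univ, true_and,
        Finset.mem_erase]
      constructor
      · rintro ⟨hne, -⟩; exact (Fin.lt_or_lt_of_ne hne.symm).imp id id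
      · rintro (h | h)
        · exact ⟨h.ne', trivial⟩
        · exact ⟨h.ne, trivial⟩
    have hdisj : Disjoint T1 T2 := by
      rw [Finset.disjoint_left]
      intro p hp1 hp2
      simp only [hT1, hT2, Finset.mem_filter] at hp1 hp2
      exact absurd hp2.2 (asymm hp1.2)
    rw [hsplit, Finset.prod_union hdisj]
    congr 1
    refine Finset.prod_nbij' (fun p => (p.2, p.1)) (fun p => (p.2, p.1)) ?_ ?_ ?_ ?_ ?_
    · intro p hp; simp only [hT1, hT2, Finset.mem_filter] at *; exact ⟨Finset.mem_univ _, hp.2⟩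
    · intro p hp; simp only [hT1, hT2, Finset.mem_filter] at *; exact ⟨Finset.mem_univ _, hp.2⟩
    · intro p _; rfl
    · intro p _; rfl
    · intro p _; exact abs_sub_comm _ _
  have hV0 : (∏ p ∈ T1, g p) ≠ 0 := by
    apply Finset.prod_ne_zero_iff.2
    intro p hp
    simp only [hT1, Finset.mem_filter] at hp
    exact abs_ne_zero.2 (sub_ne_zero.2 (fun hc => (hp.2.ne) (hlam hc)))
  rw [hV, hd] at habs
  exact mul_left_cancel₀ hV0 habs

lemma key {m : ℕ} (lam : Fin m → ℝ) (v : Fin m → ℝ) (i : Fin m) :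
    weightsToCoeffs0 lam v i =
      (∏ j, (X - C (lam j)) : ℝ[X]).coeff i +
        ∑ j, (lam j * (∏ k ∈ Finset.univ.erase j, (X - C (lam k)) : ℝ[X]).coeff i) * v j := by
  have poly_id :
    (C (1 - ∑ k, v k) * ∏ j, (X - C (lam j)) +
      ∑ j, C (v j) * (X * ∏ k ∈ Finset.univ.erase j, (X - C (lam k)))) =
    (∏ j, (X - C (lam j)) : ℝ[X]) +
      ∑ j, C (v j * lam j) * ∏ k ∈ Finset.univ.erase j, (X - C (lam k)) := by
    have hP : ∀ j : Fin m, (∏ j, (X - C (lam j)) : ℝ[X]) =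
        (X - C (lam j)) * ∏ k ∈ Finset.univ.erase j, (X - C (lam k)) :=
      fun j => (Finset.mul_prod_erase univ _ (mem_univ j)).symm
    have h1 : (C (1 - ∑ k, v k) : ℝ[X]) = 1 - ∑ k, C (v k) := by
      rw [map_sub, map_sum, map_one]
    rw [h1, sub_mul, one_mul, Finset.sum_mul, add_comm_sub, ← Finset.sum_sub_distrib]
    congr 1
    apply Finset.sum_congr rfl
    intro j _
    rw [hP j, map_mul]
    ring
  rw [weightsToCoeffs0, poly_id, Polynomial.coeff_add, Polynomial.finset_sum_coeff]
  congr 1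
  apply Finset.sum_congr rfl
  intro j _
  rw [Polynomial.coeff_C_mul]
  ring

/-- for fixed distinct nonzero reals λ₁,…,λ_m, the map
(w₁,…,w_m) ↦ (q₀,…,q_{m−1}) is differentiable on the open simplex and the absolute
value of its Jacobian determinant is ∏_j |λ_j| · ∏_{j<k} |λ_j − λ_k| at every point. -/
theorem stmt14 (m : ℕ) (lam : Fin m → ℝ) (hlam : Function.Injective lam)
    (hlam0 : ∀ j, lam j ≠ 0)
    (w : Fin m → ℝ) (hw : ∀ j, 0 < w j) (hw1 : ∑ j, w j < 1) :
    DifferentiableAt ℝ (weightsToCoeffs0 lam) w ∧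
    |LinearMap.det ((fderiv ℝ (weightsToCoeffs0 lam) w).toLinearMap)| =
      (∏ j, |lam j|) *
        ∏ p ∈ Finset.univ.filter (fun p : Fin m × Fin m => p.1 < p.2),
          |lam p.1 - lam p.2| := by
  set A := Matrix.of (fun i j : Fin m =>
        (∏ k ∈ Finset.univ.erase j, (X - C (lam k)) : ℝ[X]).coeff i) with hA
  set M : Matrix (Fin m) (Fin m) ℝ :=
    Matrix.of (fun i j : Fin m => lam j * A i j) with hM
  set L' := (Matrix.toLin' M).toContinuousLinearMap with hL'
  have hf : weightsToCoeffs0 lam =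
      fun v => (fun i : Fin m => (∏ j, (X - C (lam j)) : ℝ[X]).coeff (i : ℕ)) + L' v := by
    funext v
    funext i
    rw [key]
    have : (L' v) i = ∑ j, M i j * v j := by
      simp [hL', Matrix.toLin'_apply, Matrix.mulVec, dotProduct]
    simp only [Pi.add_apply, this, hM, Matrix.of_apply]
    rfl
  have hF : HasFDerivAt (weightsToCoeffs0 lam) L' w := by
    rw [hf]
    exact (L'.hasFDerivAt).const_add _
  refine ⟨hF.differentiableAt, ?_⟩
  rw [hF.fderiv]
  have hcoe : (L'.toLinearMap : (Fin m → ℝ) →ₗ[ℝ] (Fin m → ℝ)) = Matrix.toLin' M := rfl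
  rw [hcoe, LinearMap.det_toLin']
  have hMA : M = A * Matrix.diagonal lam := by
    ext i j
    rw [Matrix.mul_diagonal, hM, Matrix.of_apply, mul_comm]
  rw [hMA, Matrix.det_mul, Matrix.det_diagonal, abs_mul, Finset.abs_prod, detA_abs lam hlam,
    mul_comm]
end
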